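/- Set l_n = c^n_{x₀,x₁}, the conductance between the two leftmost bottom-row points for the set E_n⁺ computed at level n. Then l_1 = 20/9, and for every n ≥ 1: l_{n+1} = (5/3)·l_n + 98·25^{n+1}·(10·3^{n+1} + 39·10^{n+1}) / ((3^{n+1} + 6·10^{n+1})·(5·3^{n+1} + 16·10^{n+1})·(5·3^{n+1} + 9·10^{n+1})). -/

import Mathlib

open scoped BigOperators

noncomputable section

namespace SGPaper

/-- The three corners of the Sierpinski gasket:
`q₀ = (1/2, √3/2)`, `q₁ = (0,0)`, `q₂ = (1,0)`. -/
def q : Fin 3 → ℝ × ℝ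
  | 0 => (1 / 2, Real.sqrt 3 / 2)
  | 1 => (0, 0)
  | 2 => (1, 0)

/-- The contraction map towards corner `i`: `F_i(x) = (x + q_i)/2`. -/
def Fmap (i : Fin 3) (x : ℝ × ℝ) : ℝ × ℝ := (2⁻¹ : ℝ) • (x + q i)

/-- `Fword w = F_{w₁} ∘ ⋯ ∘ F_{w_m}` for the word `w = w₁⋯w_m`. -/
def Fword (w : List (Fin 3)) : ℝ × ℝ → ℝ × ℝ :=
  w.foldr (fun i f => Fmap i ∘ f) id

/-- The level-`m` vertex set of the Sierpinski gasket:
`V_m = ⋃_{|w| = m} F_w({q₀, q₁, q₂})`. -/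
def V (m : ℕ) : Set (ℝ × ℝ) :=
  {x | ∃ w : List (Fin 3), w.length = m ∧ ∃ i : Fin 3, x = Fword w (q i)}

/-- `x` and `y` are `m`-neighbors: they are distinct and belong to a common
level-`m` cell `F_w({q₀, q₁, q₂})`. -/
def Nbr (m : ℕ) (x y : ℝ × ℝ) : Prop :=
  x ≠ y ∧ ∃ w : List (Fin 3), w.length = m ∧
    (∃ i : Fin 3, x = Fword w (q i)) ∧ (∃ j : Fin 3, y = Fword w (q j))

/-- The value `(u x - u y)²` on the unordered pair `{x, y}`. -/
def edgeVal (u : ℝ × ℝ → ℝ) : Sym2 (ℝ × ℝ) → ℝ :=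
  Sym2.lift ⟨fun x y => (u x - u y) ^ 2, fun _ _ => by ring⟩

/-- The unordered pair `e` is an edge of the level-`m` graph `Γ_m`. -/
def IsEdge (m : ℕ) (e : Sym2 (ℝ × ℝ)) : Prop :=
  ∃ x y : ℝ × ℝ, Nbr m x y ∧ e = s(x, y)

/-- The level-`m` graph energy: `E_m(u) = (5/3)^m Σ (u x − u y)²`, the sum being over
unordered `m`-neighbor pairs `{x, y}` (a finite set, so `tsum` is the honest sum). -/
def Energy (m : ℕ) (u : ℝ × ℝ → ℝ) : ℝ :=
  (5 / 3 : ℝ) ^ m * ∑' e : {e : Sym2 (ℝ × ℝ) // IsEdge m e}, edgeVal u e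

/-- `Q_E(v)`: minimal level-`m` energy among functions `u : V_m → ℝ` agreeing
with `v` on `E` (the minimum is attained, so it equals this infimum). -/
def Q (m : ℕ) (E : Set (ℝ × ℝ)) (v : ℝ × ℝ → ℝ) : ℝ :=
  sInf {r | ∃ u : ℝ × ℝ → ℝ, (∀ x ∈ E, u x = v x) ∧ r = Energy m u}

/-- Indicator function of the point `z`. -/
def ind (z : ℝ × ℝ) : ℝ × ℝ → ℝ := fun t => if t = z then 1 else 0

/-- The conductance `c^E_{x,y} = (Q_E(𝟙_x) + Q_E(𝟙_y) − Q_E(𝟙_x + 𝟙_y))/2`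
between `x, y ∈ E`, computed at level `m`. -/
def cond (m : ℕ) (E : Set (ℝ × ℝ)) (x y : ℝ × ℝ) : ℝ :=
  (Q m E (ind x) + Q m E (ind y) - Q m E (ind x + ind y)) / 2

/-- The `j`-th bottom-row point of `V_n`: `x_j = q₁ + (j/2ⁿ)(q₂ − q₁)`. -/
def xb (n j : ℕ) : ℝ × ℝ := q 1 + ((j : ℝ) / 2 ^ n) • (q 2 - q 1)

/-- The bottom row `Ẽ_n = {x₀, …, x_{2ⁿ}}` of `V_n`. -/
def Ebot (n : ℕ) : Set (ℝ × ℝ) := {p | ∃ j ≤ 2 ^ n, p = xb n j}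

/-- The bottom row together with the top point: `E_n⁺ = {q₀, x₀, …, x_{2ⁿ}}`. -/
def Eplus (n : ℕ) : Set (ℝ × ℝ) := insert (q 0) (Ebot n)

/-! ### Section 1: basic geometry -/

lemma sqrt3_pos : 0 < Real.sqrt 3 := Real.sqrt_pos.mpr (by norm_num)

lemma sqrt3_ne : Real.sqrt 3 ≠ 0 := ne_of_gt sqrt3_pos

lemma Fmap_coord (i : Fin 3) (x : ℝ × ℝ) :
    Fmap i x = ((x.1 + (q i).1) / 2, (x.2 + (q i).2) / 2) := by
  simp [Fmap, Prod.ext_iff, Prod.smul_fst, Prod.smul_snd]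
  constructor <;> ring

lemma Fmap_inj (i : Fin 3) : Function.Injective (Fmap i) := by
  intro x y h
  rw [Fmap_coord, Fmap_coord, Prod.ext_iff] at h
  obtain ⟨h1, h2⟩ := h
  exact Prod.ext (by linarith [h1]) (by linarith [h2])

lemma Fmap_inv (i : Fin 3) (x : ℝ × ℝ) : (2 : ℝ) • Fmap i x - q i = x := by
  simp [Fmap, smul_smul]

lemma Fmap_fix (i : Fin 3) : Fmap i (q i) = q i := by
  rw [Fmap_coord]; exact Prod.ext (by ring) (by ring)

/-- The closed triangle containing the gasket. -/
def Tset : Set (ℝ × ℝ) :=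
  {p | 0 ≤ p.2 ∧ p.2 ≤ Real.sqrt 3 * p.1 ∧ p.2 ≤ Real.sqrt 3 * (1 - p.1)}

lemma q_mem_T (i : Fin 3) : q i ∈ Tset := by
  fin_cases i <;> simp only [Tset, Set.mem_setOf_eq, q] <;> refine ⟨?_, ?_, ?_⟩ <;>
    nlinarith [sqrt3_pos]

lemma Fmap_mem_T {p : ℝ × ℝ} (i : Fin 3) (hp : p ∈ Tset) : Fmap i p ∈ Tset := by
  obtain ⟨h1, h2, h3⟩ := hp
  rw [Fmap_coord]
  fin_cases i <;> simp only [Tset, Set.mem_setOf_eq, q] <;> refine ⟨?_, ?_, ?_⟩ <;>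
    nlinarith [sqrt3_pos]

lemma V_subset_T (m : ℕ) : V m ⊆ Tset := by
  rintro x ⟨w, -, i, rfl⟩
  induction w with
  | nil => exact q_mem_T i
  | cons a w ih => exact Fmap_mem_T a ih

lemma int12 {x y : ℝ × ℝ} (hx : x ∈ Tset) (hy : y ∈ Tset)
    (h : Fmap 1 x = Fmap 2 y) : Fmap 1 x = ((1:ℝ)/2, 0) := by
  obtain ⟨hx1, hx2, hx3⟩ := hx
  obtain ⟨hy1, hy2, hy3⟩ := hy
  rw [Fmap_coord, Fmap_coord, Prod.ext_iff] at h
  simp [q] at h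
  obtain ⟨h1, h2⟩ := h
  rw [Fmap_coord]
  simp [q]
  have hx1' : x.1 = 1 := by nlinarith [sqrt3_pos]
  have hx2' : x.2 = 0 := by nlinarith [sqrt3_pos]
  constructor
  · linarith
  · linarith

lemma int01 {x y : ℝ × ℝ} (hx : x ∈ Tset) (hy : y ∈ Tset)
    (h : Fmap 0 x = Fmap 1 y) : Fmap 0 x = ((1:ℝ)/4, Real.sqrt 3 / 4) ∧ x = q 1 := by
  obtain ⟨hx1, hx2, hx3⟩ := hx
  obtain ⟨hy1, hy2, hy3⟩ := hy
  rw [Fmap_coord, Fmap_coord, Prod.ext_iff] at h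
  simp [q] at h
  obtain ⟨h1, h2⟩ := h
  -- psi(p) = sqrt3 * p.1 + p.2 ; psi(y) = psi(x) + sqrt 3, psi(x) >= 0, psi(y) <= sqrt 3
  have hx1' : x.1 = 0 := by nlinarith [sqrt3_pos]
  have hx2' : x.2 = 0 := by nlinarith [sqrt3_pos]
  constructor
  · rw [Fmap_coord]; simp [q]
    first
      | (constructor <;> linarith)
      | linarith
  · simp [q, Prod.ext_iff, hx1', hx2']

lemma int02 {x y : ℝ × ℝ} (hx : x ∈ Tset) (hy : y ∈ Tset)
    (h : Fmap 0 x = Fmap 2 y) : Fmap 0 x = ((3:ℝ)/4, Real.sqrt 3 / 4) ∧ x = q 2 := by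
  obtain ⟨hx1, hx2, hx3⟩ := hx
  obtain ⟨hy1, hy2, hy3⟩ := hy
  rw [Fmap_coord, Fmap_coord, Prod.ext_iff] at h
  simp [q] at h
  obtain ⟨h1, h2⟩ := h
  have hx1' : x.1 = 1 := by nlinarith [sqrt3_pos]
  have hx2' : x.2 = 0 := by nlinarith [sqrt3_pos]
  constructor
  · rw [Fmap_coord]; simp [q]
    first
      | (constructor <;> linarith)
      | linarith
  · simp [q, Prod.ext_iff, hx1', hx2']

/-! ### Section 2: edges and energy -/

lemma q_ne_01 : q 0 ≠ q 1 := by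
  simp [q, Prod.ext_iff]

lemma q_ne_02 : q 0 ≠ q 2 := by
  simp [q, Prod.ext_iff]

lemma q_ne_12 : q 1 ≠ q 2 := by
  simp [q, Prod.ext_iff]

lemma Fword_cons (a : Fin 3) (w : List (Fin 3)) (x : ℝ × ℝ) :
    Fword (a :: w) x = Fmap a (Fword w x) := rfl

lemma Fword_nil (x : ℝ × ℝ) : Fword [] x = x := rfl

lemma mem_V_of_word {m : ℕ} {w : List (Fin 3)} (hw : w.length = m) (i : Fin 3) :
    Fword w (q i) ∈ V m := ⟨w, hw, i, rfl⟩

lemma edgeVal_pair (u : ℝ × ℝ → ℝ) (x y : ℝ × ℝ) :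
    edgeVal u s(x, y) = (u x - u y) ^ 2 := rfl

lemma edgeVal_nonneg (u : ℝ × ℝ → ℝ) (e : Sym2 (ℝ × ℝ)) : 0 ≤ edgeVal u e := by
  induction e using Sym2.ind with
  | _ x y => rw [edgeVal_pair]; positivity

/-- Characterization of level-0 edges. -/
lemma isEdge_zero {e : Sym2 (ℝ × ℝ)} :
    IsEdge 0 e ↔ e = s(q 0, q 1) ∨ e = s(q 0, q 2) ∨ e = s(q 1, q 2) := by
  constructor
  · rintro ⟨x, y, ⟨hxy, w, hw, ⟨i, rfl⟩, ⟨j, rfl⟩⟩, rfl⟩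
    rw [List.length_eq_zero_iff] at hw
    subst hw
    simp only [Fword_nil] at hxy ⊢
    fin_cases i <;> fin_cases j <;> simp_all [Sym2.eq_iff] <;> tauto
  · have h : ∀ i j : Fin 3, q i ≠ q j → IsEdge 0 s(q i, q j) := by
      intro i j hij
      exact ⟨q i, q j, ⟨hij, [], rfl, ⟨i, rfl⟩, ⟨j, rfl⟩⟩, rfl⟩
    rintro (rfl | rfl | rfl)
    · exact h 0 1 q_ne_01
    · exact h 0 2 q_ne_02
    · exact h 1 2 q_ne_12

lemma endpoints_mem_V {m : ℕ} {x y : ℝ × ℝ} (h : Nbr m x y) : x ∈ V m ∧ y ∈ V m := by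
  obtain ⟨-, w, hw, ⟨i, rfl⟩, ⟨j, rfl⟩⟩ := h
  exact ⟨mem_V_of_word hw i, mem_V_of_word hw j⟩

lemma edge_map_wd {m : ℕ} (i : Fin 3) {e : Sym2 (ℝ × ℝ)} (he : IsEdge m e) :
    IsEdge (m + 1) (Sym2.map (Fmap i) e) := by
  obtain ⟨x, y, ⟨hxy, w, hw, ⟨a, rfl⟩, ⟨b, rfl⟩⟩, rfl⟩ := he
  refine ⟨Fmap i (Fword w (q a)), Fmap i (Fword w (q b)),
    ⟨fun h => hxy (Fmap_inj i h), i :: w, by simp [hw], ⟨a, rfl⟩, ⟨b, rfl⟩⟩, by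
      simp [Sym2.map_pair_eq]⟩

lemma interPt01 {p p' : ℝ × ℝ} (hp : p ∈ Tset) (hp' : p' ∈ Tset)
    (h : Fmap 0 p = Fmap 1 p') : Fmap 0 p = (2⁻¹ : ℝ) • (q 0 + q 1) :=
  (int01 hp hp' h).1.trans (by rw [Prod.ext_iff]; constructor <;> simp [q] <;> ring)

lemma interPt02 {p p' : ℝ × ℝ} (hp : p ∈ Tset) (hp' : p' ∈ Tset)
    (h : Fmap 0 p = Fmap 2 p') : Fmap 0 p = (2⁻¹ : ℝ) • (q 0 + q 2) :=
  (int02 hp hp' h).1.trans (by rw [Prod.ext_iff]; constructor <;> simp [q] <;> ring)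

lemma interPt12 {p p' : ℝ × ℝ} (hp : p ∈ Tset) (hp' : p' ∈ Tset)
    (h : Fmap 1 p = Fmap 2 p') : Fmap 1 p = (2⁻¹ : ℝ) • (q 1 + q 2) :=
  (int12 hp hp' h).trans (by rw [Prod.ext_iff]; constructor <;> simp [q] <;> ring)

lemma interPt10 {p p' : ℝ × ℝ} (hp : p ∈ Tset) (hp' : p' ∈ Tset)
    (h : Fmap 1 p = Fmap 0 p') : Fmap 1 p = (2⁻¹ : ℝ) • (q 1 + q 0) :=
  (h.trans (interPt01 hp' hp h.symm)).trans (by rw [add_comm])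

lemma interPt20 {p p' : ℝ × ℝ} (hp : p ∈ Tset) (hp' : p' ∈ Tset)
    (h : Fmap 2 p = Fmap 0 p') : Fmap 2 p = (2⁻¹ : ℝ) • (q 2 + q 0) :=
  (h.trans (interPt02 hp' hp h.symm)).trans (by rw [add_comm])

lemma interPt21 {p p' : ℝ × ℝ} (hp : p ∈ Tset) (hp' : p' ∈ Tset)
    (h : Fmap 2 p = Fmap 1 p') : Fmap 2 p = (2⁻¹ : ℝ) • (q 2 + q 1) :=
  (h.trans (interPt12 hp' hp h.symm)).trans (by rw [add_comm])

lemma interPt {i j : Fin 3} (hij : i ≠ j) {p p' : ℝ × ℝ} (hp : p ∈ Tset) (hp' : p' ∈ Tset)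
    (h : Fmap i p = Fmap j p') : Fmap i p = (2⁻¹ : ℝ) • (q i + q j) := by
  fin_cases i <;> fin_cases j
  · exact absurd rfl hij
  · exact interPt01 hp hp' h
  · exact interPt02 hp hp' h
  · exact interPt10 hp hp' h
  · exact absurd rfl hij
  · exact interPt12 hp hp' h
  · exact interPt20 hp hp' h
  · exact interPt21 hp hp' h
  · exact absurd rfl hij

lemma cross_copy {m : ℕ} {i j : Fin 3} (hij : i ≠ j) {x y x' y' : ℝ × ℝ}
    (hx : x ∈ V m) (hy : y ∈ V m) (hx' : x' ∈ V m) (hy' : y' ∈ V m)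
    (h1 : Fmap i x = Fmap j x') (h2 : Fmap i y = Fmap j y') : x = y := by
  apply Fmap_inj i
  rw [interPt hij (V_subset_T m hx) (V_subset_T m hx') h1,
    interPt hij (V_subset_T m hy) (V_subset_T m hy') h2]

/-! ### Section 3: edge bijection and energy decomposition -/

lemma edge_map_bijective (m : ℕ) :
    Function.Bijective (fun pe : Fin 3 × {e : Sym2 (ℝ × ℝ) // IsEdge m e} =>
      (⟨Sym2.map (Fmap pe.1) pe.2.1, edge_map_wd pe.1 pe.2.2⟩ :
        {e : Sym2 (ℝ × ℝ) // IsEdge (m + 1) e})) := by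
  constructor
  · rintro ⟨i, e, he⟩ ⟨j, e', he'⟩ hmap
    simp only [Subtype.mk.injEq] at hmap
    obtain ⟨x, y, hnbr, rfl⟩ := he
    obtain ⟨x', y', hnbr', rfl⟩ := he'
    rw [Sym2.map_pair_eq, Sym2.map_pair_eq, Sym2.eq_iff] at hmap
    have hx := (endpoints_mem_V hnbr).1
    have hy := (endpoints_mem_V hnbr).2
    have hx' := (endpoints_mem_V hnbr').1
    have hy' := (endpoints_mem_V hnbr').2
    by_cases hij : i = j
    · subst hij
      simp only [Prod.mk.injEq, Subtype.mk.injEq]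
      refine ⟨trivial, ?_⟩
      apply Subtype.ext; dsimp only
      rw [Sym2.eq_iff]
      rcases hmap with ⟨h1, h2⟩ | ⟨h1, h2⟩
      · exact Or.inl ⟨Fmap_inj i h1, Fmap_inj i h2⟩
      · exact Or.inr ⟨Fmap_inj i h1, Fmap_inj i h2⟩
    · exfalso
      rcases hmap with ⟨h1, h2⟩ | ⟨h1, h2⟩
      · exact hnbr.1 (cross_copy hij hx hy hx' hy' h1 h2)
      · exact hnbr.1 (cross_copy hij hx hy hy' hx' h1 h2)
  · rintro ⟨e, x, y, hnbr, rfl⟩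
    obtain ⟨hxy, w, hw, ⟨a, hxa⟩, ⟨b, hyb⟩⟩ := hnbr
    cases w with
    | nil => simp at hw
    | cons c w' =>
      have hw' : w'.length = m := by simpa using hw
      have hx' : x = Fmap c (Fword w' (q a)) := hxa
      have hy' : y = Fmap c (Fword w' (q b)) := hyb
      refine ⟨⟨c, ⟨s(Fword w' (q a), Fword w' (q b)), Fword w' (q a), Fword w' (q b),
        ⟨?_, w', hw', ⟨a, rfl⟩, ⟨b, rfl⟩⟩, rfl⟩⟩, ?_⟩
      · intro hcon
        exact hxy (by rw [hx', hy', hcon])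
      · simp only [Sym2.map_pair_eq, Subtype.mk.injEq]
        apply Subtype.ext; dsimp only
        rw [hx', hy']

lemma edge_finite : ∀ m : ℕ, Finite {e : Sym2 (ℝ × ℝ) // IsEdge m e} := by
  intro m
  induction m with
  | zero =>
    have hsub : {e : Sym2 (ℝ × ℝ) | IsEdge 0 e} ⊆
        {s(q 0, q 1), s(q 0, q 2), s(q 1, q 2)} := by
      intro e he
      rcases isEdge_zero.mp he with h | h | h <;> simp [h]
    exact ((Set.finite_singleton _).insert _ |>.insert _ |>.subset hsub).to_subtype
  | succ m ih =>
    exact Finite.of_surjective _ (edge_map_bijective m).surjective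

noncomputable instance edgeFintype (m : ℕ) : Fintype {e : Sym2 (ℝ × ℝ) // IsEdge m e} :=
  @Fintype.ofFinite _ (edge_finite m)

lemma edgeVal_map (u : ℝ × ℝ → ℝ) (i : Fin 3) (e : Sym2 (ℝ × ℝ)) :
    edgeVal u (Sym2.map (Fmap i) e) = edgeVal (u ∘ Fmap i) e := by
  induction e using Sym2.ind with
  | _ x y => rw [Sym2.map_pair_eq, edgeVal_pair, edgeVal_pair]; rfl

lemma energy_succ (m : ℕ) (u : ℝ × ℝ → ℝ) :
    Energy (m + 1) u =
      (5 / 3 : ℝ) * (Energy m (u ∘ Fmap 0) + Energy m (u ∘ Fmap 1) + Energy m (u ∘ Fmap 2)) := by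
  unfold Energy
  rw [tsum_fintype, tsum_fintype, tsum_fintype, tsum_fintype]
  have hbij := edge_map_bijective m
  rw [← Function.Bijective.sum_comp hbij (fun e => edgeVal u e.1)]
  rw [Fintype.sum_prod_type]
  rw [Fin.sum_univ_three]
  simp only [edgeVal_map]
  ring

lemma energy_congr {m : ℕ} {u v : ℝ × ℝ → ℝ} (h : ∀ x ∈ V m, u x = v x) :
    Energy m u = Energy m v := by
  unfold Energy
  congr 1
  apply tsum_congr
  rintro ⟨e, x, y, hnbr, rfl⟩
  rw [edgeVal_pair, edgeVal_pair, h x (endpoints_mem_V hnbr).1, h y (endpoints_mem_V hnbr).2]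

lemma energy_nonneg (m : ℕ) (u : ℝ × ℝ → ℝ) : 0 ≤ Energy m u := by
  unfold Energy
  have : 0 ≤ ∑' e : {e : Sym2 (ℝ × ℝ) // IsEdge m e}, edgeVal u e.1 :=
    tsum_nonneg fun e => edgeVal_nonneg u e.1
  positivity

lemma energy_zero (u : ℝ × ℝ → ℝ) :
    Energy 0 u = (u (q 0) - u (q 1)) ^ 2 + (u (q 0) - u (q 2)) ^ 2 + (u (q 1) - u (q 2)) ^ 2 := by
  classical
  unfold Energy
  rw [pow_zero, one_mul]
  have hset : {e : Sym2 (ℝ × ℝ) | IsEdge 0 e} =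
      (↑({s(q 0, q 1), s(q 0, q 2), s(q 1, q 2)} : Finset (Sym2 (ℝ × ℝ))) : Set (Sym2 (ℝ × ℝ))) := by
    ext e
    rw [Set.mem_setOf_eq, isEdge_zero]
    simp
  have hne1 : s(q 0, q 1) ∉ ({s(q 0, q 2), s(q 1, q 2)} : Finset (Sym2 (ℝ × ℝ))) := by
    simp [Sym2.eq_iff, q_ne_01, q_ne_02, q_ne_12, q_ne_01.symm, q_ne_02.symm, q_ne_12.symm]
  have hne2 : s(q 0, q 2) ∉ ({s(q 1, q 2)} : Finset (Sym2 (ℝ × ℝ))) := by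
    simp [Sym2.eq_iff, q_ne_01, q_ne_02, q_ne_12, q_ne_01.symm, q_ne_02.symm, q_ne_12.symm]
  calc ∑' e : {e : Sym2 (ℝ × ℝ) // IsEdge 0 e}, edgeVal u e.1
      = ∑' e : (↑({s(q 0, q 1), s(q 0, q 2), s(q 1, q 2)} : Finset (Sym2 (ℝ × ℝ))) :
          Set (Sym2 (ℝ × ℝ))), edgeVal u e.1 := by
        exact (Equiv.setCongr hset).tsum_eq
          (fun b : (↑({s(q 0, q 1), s(q 0, q 2), s(q 1, q 2)} : Finset (Sym2 (ℝ × ℝ))) :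
            Set (Sym2 (ℝ × ℝ))) => edgeVal u b.1)
    _ = ∑ e ∈ ({s(q 0, q 1), s(q 0, q 2), s(q 1, q 2)} : Finset (Sym2 (ℝ × ℝ))), edgeVal u e :=
        Finset.tsum_subtype _ _
    _ = _ := by
      rw [Finset.sum_insert hne1, Finset.sum_insert hne2, Finset.sum_singleton,
        edgeVal_pair, edgeVal_pair, edgeVal_pair]
      ring

/-! ### Section 4: points and gluing -/

lemma xb_coord (n j : ℕ) : xb n j = ((j : ℝ) / 2 ^ n, 0) := by
  simp [xb, q, Prod.ext_iff]
  try ring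

lemma xb_zero (n : ℕ) : xb n 0 = q 1 := by
  rw [xb_coord]; simp [q]

lemma xb_last (n : ℕ) : xb n (2 ^ n) = q 2 := by
  rw [xb_coord]; simp [q]

lemma Fmap1_xb (n j : ℕ) : Fmap 1 (xb n j) = xb (n + 1) j := by
  rw [xb_coord, xb_coord, Fmap_coord]
  simp [q, Prod.ext_iff]
  ring

lemma Fmap2_xb (n j : ℕ) : Fmap 2 (xb n j) = xb (n + 1) (2 ^ n + j) := by
  rw [xb_coord, xb_coord, Fmap_coord]
  simp [q, Prod.ext_iff]
  field_simp
  ring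

lemma F0q1_eq_F1q0 : Fmap 0 (q 1) = Fmap 1 (q 0) := by
  simp [Fmap, add_comm]

lemma F0q2_eq_F2q0 : Fmap 0 (q 2) = Fmap 2 (q 0) := by
  simp [Fmap, add_comm]

lemma Fmap_mem_V {n : ℕ} (i : Fin 3) {x : ℝ × ℝ} (hx : x ∈ V n) : Fmap i x ∈ V (n + 1) := by
  obtain ⟨w, hw, a, rfl⟩ := hx
  exact ⟨i :: w, by simp [hw], a, rfl⟩

lemma q_mem_V (n : ℕ) (i : Fin 3) : q i ∈ V n := by
  induction n with
  | zero => exact ⟨[], rfl, i, rfl⟩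
  | succ n ih => exact Fmap_fix i ▸ Fmap_mem_V i ih

lemma xb_mem_V {n j : ℕ} (hj : j ≤ 2 ^ n) : xb n j ∈ V n := by
  induction n generalizing j with
  | zero =>
    interval_cases j
    · exact xb_zero 0 ▸ q_mem_V 0 1
    · exact xb_last 0 ▸ q_mem_V 0 2
  | succ n ih =>
    rcases le_or_gt j (2 ^ n) with h | h
    · exact Fmap1_xb n j ▸ Fmap_mem_V 1 (ih h)
    · have hj' : j - 2 ^ n ≤ 2 ^ n := by
        rw [pow_succ] at hj; omega
      have : 2 ^ n + (j - 2 ^ n) = j := by omega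
      exact this ▸ Fmap2_xb n (j - 2 ^ n) ▸ Fmap_mem_V 2 (ih hj')

lemma xb_inj {n j j' : ℕ} (h : xb n j = xb n j') : j = j' := by
  rw [xb_coord, xb_coord, Prod.ext_iff] at h
  have := h.1
  field_simp at this
  exact_mod_cast this

lemma q0_ne_xb (n j : ℕ) : q 0 ≠ xb n j := by
  rw [xb_coord]
  simp [q, Prod.ext_iff]
  try (intro _; exact absurd (by linarith : Real.sqrt 3 = 0) sqrt3_ne)

/-- Gluing three functions along the three copies. -/
lemma glue (n : ℕ) (u0 u1 u2 : ℝ × ℝ → ℝ) (h01 : u0 (q 1) = u1 (q 0))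
    (h02 : u0 (q 2) = u2 (q 0)) (h12 : u1 (q 2) = u2 (q 1)) :
    ∃ u : ℝ × ℝ → ℝ, ∀ x ∈ V n,
      u (Fmap 0 x) = u0 x ∧ u (Fmap 1 x) = u1 x ∧ u (Fmap 2 x) = u2 x := by
  classical
  refine ⟨fun y => if ∃ x ∈ V n, Fmap 1 x = y then u1 ((2 : ℝ) • y - q 1)
    else if ∃ x ∈ V n, Fmap 2 x = y then u2 ((2 : ℝ) • y - q 2)
    else u0 ((2 : ℝ) • y - q 0), ?_⟩
  intro x hx
  have hxT := V_subset_T n hx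
  refine ⟨?_, ?_, ?_⟩ <;> dsimp only
  · -- copy 0
    by_cases h1 : ∃ x' ∈ V n, Fmap 1 x' = Fmap 0 x
    · obtain ⟨x', hx', he⟩ := h1
      have hpt := interPt10 (V_subset_T n hx') hxT he
      rw [if_pos ⟨x', hx', he⟩]
      have hxq : x = q 1 := by
        have := (int01 hxT (V_subset_T n hx') he.symm).2
        exact this
      have harg : (2 : ℝ) • Fmap 0 x - q 1 = q 0 := by
        rw [← he, Fmap_inv]
        rw [hxq] at he
        have : Fmap 1 x' = Fmap 1 (q 0) := by
          rw [he, F0q1_eq_F1q0]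
        exact Fmap_inj 1 this
      rw [harg, ← h01, hxq]
    · rw [if_neg h1]
      by_cases h2 : ∃ x' ∈ V n, Fmap 2 x' = Fmap 0 x
      · obtain ⟨x', hx', he⟩ := h2
        rw [if_pos ⟨x', hx', he⟩]
        have hxq : x = q 2 := (int02 hxT (V_subset_T n hx') he.symm).2
        have harg : (2 : ℝ) • Fmap 0 x - q 2 = q 0 := by
          rw [← he, Fmap_inv]
          rw [hxq] at he
          have : Fmap 2 x' = Fmap 2 (q 0) := by
            rw [he, F0q2_eq_F2q0]
          exact Fmap_inj 2 this
        rw [harg, ← h02, hxq]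
      · rw [if_neg h2, Fmap_inv]
  · -- copy 1
    rw [if_pos ⟨x, hx, rfl⟩, Fmap_inv]
  · -- copy 2
    by_cases h1 : ∃ x' ∈ V n, Fmap 1 x' = Fmap 2 x
    · obtain ⟨x', hx', he⟩ := h1
      rw [if_pos ⟨x', hx', he⟩]
      -- Fmap 1 x' = Fmap 2 x = (1/2, 0); x = q 1, x' = q 2
      have hpt : Fmap 1 x' = (2⁻¹ : ℝ) • (q 1 + q 2) := interPt12 (V_subset_T n hx') hxT he
      have hx'q : x' = q 2 := by
        apply Fmap_inj 1
        rw [hpt]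
        rw [Fmap_coord]
        rw [Prod.ext_iff]
        constructor <;> simp [q] <;> norm_num
      have hxq : x = q 1 := by
        apply Fmap_inj 2
        rw [← he, hpt, Fmap_coord, Prod.ext_iff]
        constructor <;> simp [q] <;> norm_num
      have harg : (2 : ℝ) • Fmap 2 x - q 1 = q 2 := by
        rw [← he, Fmap_inv, hx'q]
      rw [harg, h12, hxq]
    · rw [if_neg h1]
      rw [if_pos ⟨x, hx, rfl⟩, Fmap_inv]

/-! ### Section 5: renormalization on the three corners -/

/-- The level-0 triangle energy form. -/
def Tform (a b c : ℝ) : ℝ := (a - b) ^ 2 + (a - c) ^ 2 + (b - c) ^ 2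

lemma F1q2_eq_F2q1 : Fmap 1 (q 2) = Fmap 2 (q 1) := by
  simp [Fmap, add_comm]

/-- `RNdata n`: the trace of the level-`n` form on the three corners is the triangle form. -/
def RNdata (n : ℕ) : Prop := ∀ c0 c1 c2 : ℝ,
  (∃ u : ℝ × ℝ → ℝ, u (q 0) = c0 ∧ u (q 1) = c1 ∧ u (q 2) = c2 ∧
    Energy n u = Tform c0 c1 c2) ∧
  ∀ u : ℝ × ℝ → ℝ, u (q 0) = c0 → u (q 1) = c1 → u (q 2) = c2 →
    Tform c0 c1 c2 ≤ Energy n u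

lemma tri_sos (c0 c1 c2 x y z : ℝ) :
    Tform c0 c1 c2 ≤ (5 / 3) * (Tform c0 x y + Tform x c1 z + Tform y z c2) := by
  unfold Tform
  nlinarith [sq_nonneg (5*x - 2*c0 - 2*c1 - c2), sq_nonneg (5*y - 2*c0 - c1 - 2*c2),
    sq_nonneg (5*z - c0 - 2*c1 - 2*c2),
    sq_nonneg ((5*x - 2*c0 - 2*c1 - c2) - (5*y - 2*c0 - c1 - 2*c2)),
    sq_nonneg ((5*x - 2*c0 - 2*c1 - c2) - (5*z - c0 - 2*c1 - 2*c2)),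
    sq_nonneg ((5*y - 2*c0 - c1 - 2*c2) - (5*z - c0 - 2*c1 - 2*c2))]

lemma tri_opt (c0 c1 c2 : ℝ) :
    (5 / 3 : ℝ) * (Tform c0 ((2*c0+2*c1+c2)/5) ((2*c0+c1+2*c2)/5)
      + Tform ((2*c0+2*c1+c2)/5) c1 ((c0+2*c1+2*c2)/5)
      + Tform ((2*c0+c1+2*c2)/5) ((c0+2*c1+2*c2)/5) c2) = Tform c0 c1 c2 := by
  unfold Tform
  ring

lemma RN_all : ∀ n, RNdata n := by
  intro n
  induction n with
  | zero =>
    intro c0 c1 c2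
    classical
    constructor
    · refine ⟨fun y => if y = q 0 then c0 else if y = q 1 then c1 else
        if y = q 2 then c2 else 0, ?_, ?_, ?_, ?_⟩
      · simp
      · simp [q_ne_01.symm, q_ne_12]
      · simp [q_ne_02.symm, q_ne_12.symm]
      · rw [energy_zero]
        simp [q_ne_01.symm, q_ne_12, q_ne_02.symm, q_ne_12.symm]
        unfold Tform
        ring
    · intro u h0 h1 h2
      rw [energy_zero, h0, h1, h2]
      exact le_of_eq (by unfold Tform; ring)
  | succ n ih =>
    intro c0 c1 c2
    constructor
    · -- attainment by gluing optimal copies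
      obtain ⟨u0, hu00, hu01, hu02, hu0E⟩ :=
        (ih c0 ((2*c0+2*c1+c2)/5) ((2*c0+c1+2*c2)/5)).1
      obtain ⟨u1, hu10, hu11, hu12, hu1E⟩ :=
        (ih ((2*c0+2*c1+c2)/5) c1 ((c0+2*c1+2*c2)/5)).1
      obtain ⟨u2, hu20, hu21, hu22, hu2E⟩ :=
        (ih ((2*c0+c1+2*c2)/5) ((c0+2*c1+2*c2)/5) c2).1
      obtain ⟨u, hu⟩ := glue n u0 u1 u2 (by rw [hu01, hu10]) (by rw [hu02, hu20])
        (by rw [hu12, hu21])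
      refine ⟨u, ?_, ?_, ?_, ?_⟩
      · rw [← Fmap_fix 0]
        rw [(hu (q 0) (q_mem_V n 0)).1, hu00]
      · rw [← Fmap_fix 1]
        rw [(hu (q 1) (q_mem_V n 1)).2.1, hu11]
      · rw [← Fmap_fix 2]
        rw [(hu (q 2) (q_mem_V n 2)).2.2, hu22]
      · rw [energy_succ]
        rw [show Energy n (u ∘ Fmap 0) = Energy n u0 from energy_congr (fun x hx => (hu x hx).1),
          show Energy n (u ∘ Fmap 1) = Energy n u1 from energy_congr (fun x hx => (hu x hx).2.1),
          show Energy n (u ∘ Fmap 2) = Energy n u2 from energy_congr (fun x hx => (hu x hx).2.2)]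
        rw [hu0E, hu1E, hu2E]
        exact tri_opt c0 c1 c2
    · intro u h0 h1 h2
      rw [energy_succ]
      have e0 := (ih c0 (u (Fmap 0 (q 1))) (u (Fmap 0 (q 2)))).2 (u ∘ Fmap 0)
        (by simp [Function.comp, Fmap_fix, h0]) rfl rfl
      have e1 := (ih (u (Fmap 0 (q 1))) c1 (u (Fmap 1 (q 2)))).2 (u ∘ Fmap 1)
        (by simp only [Function.comp_apply, ← F0q1_eq_F1q0]) (by simp [Function.comp, Fmap_fix, h1]) rfl
      have e2 := (ih (u (Fmap 0 (q 2))) (u (Fmap 1 (q 2))) c2).2 (u ∘ Fmap 2)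
        (by simp only [Function.comp_apply, ← F0q2_eq_F2q0]) (by simp only [Function.comp_apply, ← F1q2_eq_F2q1])
        (by simp [Function.comp, Fmap_fix, h2])
      calc Tform c0 c1 c2 ≤ (5/3) * (Tform c0 (u (Fmap 0 (q 1))) (u (Fmap 0 (q 2)))
            + Tform (u (Fmap 0 (q 1))) c1 (u (Fmap 1 (q 2)))
            + Tform (u (Fmap 0 (q 2))) (u (Fmap 1 (q 2))) c2) := tri_sos _ _ _ _ _ _
        _ ≤ _ := by linarith [e0, e1, e2]

/-! ### Section 6: the trace form on {x₀, x₁, q₀} -/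

def Dden (n : ℕ) : ℝ := 3 ^ n + 6 * 10 ^ n
def Tn (n : ℕ) : ℝ := 14 * 10 ^ n / Dden n
def bb0 (n : ℕ) : ℝ := -(7 * 5 ^ n) / Dden n
def bb1 (n : ℕ) : ℝ := -(14 * 5 ^ n) / Dden n
def Pq (n : ℕ) : ℝ := Tn n + 2
def Dl (n : ℕ) : ℝ := Pq n ^ 2 - 1

lemma Dden_pos (n : ℕ) : 0 < Dden n := by unfold Dden; positivity
lemma Tn_pos (n : ℕ) : 0 < Tn n := by unfold Tn Dden; positivity
lemma Dl_pos (n : ℕ) : 0 < Dl n := by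
  have := Tn_pos n
  unfold Dl Pq
  nlinarith

/-- The quadratic form giving `Q` on boundary data supported on `{x₀, x₁, q₀}`. -/
def qform (n : ℕ) (A0 A1 C s0 s1 t : ℝ) : ℝ :=
  A0 * s0 ^ 2 + A1 * s1 ^ 2 + Tn n * t ^ 2 + 2 * C * s0 * s1 +
    2 * bb0 n * s0 * t + 2 * bb1 n * s1 * t

/-- Boundary data for the constrained minimization. -/
def BD (n : ℕ) (s0 s1 t : ℝ) (u : ℝ × ℝ → ℝ) : Prop :=
  u (xb n 0) = s0 ∧ u (xb n 1) = s1 ∧ u (q 0) = t ∧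
    ∀ j : ℕ, 2 ≤ j → j ≤ 2 ^ n → u (xb n j) = 0

/-- `Q_n` on data supported on `{x₀, x₁, q₀}` is the quadratic form `qform`. -/
def IHdata (n : ℕ) (A0 A1 C : ℝ) : Prop :=
  ∀ s0 s1 t : ℝ,
    (∃ u, BD n s0 s1 t u ∧ Energy n u = qform n A0 A1 C s0 s1 t) ∧
    ∀ u, BD n s0 s1 t u → qform n A0 A1 C s0 s1 t ≤ Energy n u

def stepA0 (n : ℕ) (A0 : ℝ) : ℝ := 5 / 3 * (A0 - bb0 n ^ 2 * Pq n / Dl n)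
def stepA1 (n : ℕ) (A1 : ℝ) : ℝ := 5 / 3 * (A1 - bb1 n ^ 2 * Pq n / Dl n)
def stepC (n : ℕ) (C : ℝ) : ℝ := 5 / 3 * (C - bb0 n * bb1 n * Pq n / Dl n)

def alphaS (n : ℕ) (s0 s1 t : ℝ) : ℝ := (Pq n * (t - bb0 n * s0 - bb1 n * s1) + t) / Dl n
def betaS (n : ℕ) (s0 s1 t : ℝ) : ℝ := (Pq n * t + t - bb0 n * s0 - bb1 n * s1) / Dl n

set_option maxHeartbeats 1000000 in
/-- The master Schur-complement identity. -/
lemma master (n : ℕ) (A0 A1 C s0 s1 t α β : ℝ) :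
    5 / 3 * (Tform t α β + qform n A0 A1 C s0 s1 α + Tn n * β ^ 2) =
      qform (n + 1) (stepA0 n A0) (stepA1 n A1) (stepC n C) s0 s1 t +
        5 / 3 * (((α - alphaS n s0 s1 t) - (β - betaS n s0 s1 t)) ^ 2 +
          (Tn n + 1) * ((α - alphaS n s0 s1 t) ^ 2 + (β - betaS n s0 s1 t) ^ 2)) := by
  have hN : (0:ℝ) < 3 ^ n := by positivity
  have hM : (0:ℝ) < 10 ^ n := by positivity
  have d1 : (3:ℝ) ^ n + 6 * 10 ^ n ≠ 0 := by positivity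
  have d2 : (3:ℝ) ^ n + 20 * 10 ^ n ≠ 0 := by positivity
  have d3 : 3 * (3:ℝ) ^ n + 32 * 10 ^ n ≠ 0 := by positivity
  have d4 : (3:ℝ) ^ n * 3 + 6 * (10 ^ n * 10) ≠ 0 := by positivity
  have hPq : Pq n = (2 * (3:ℝ) ^ n + 26 * 10 ^ n) / ((3:ℝ) ^ n + 6 * 10 ^ n) := by
    unfold Pq Tn Dden
    field_simp
    ring
  have hDl : Dl n = (((3:ℝ) ^ n + 20 * 10 ^ n) * (3 * (3:ℝ) ^ n + 32 * 10 ^ n)) /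
      ((3:ℝ) ^ n + 6 * 10 ^ n) ^ 2 := by
    unfold Dl
    rw [hPq]
    field_simp
    ring
  unfold stepA0 stepA1 stepC alphaS betaS
  rw [hPq, hDl]
  unfold qform Tform Tn bb0 bb1 Dden
  simp only [pow_succ]
  field_simp
  ring

lemma qform_tbeta (n : ℕ) (A0 A1 C β : ℝ) : qform n A0 A1 C 0 0 β = Tn n * β ^ 2 := by
  unfold qform; ring

/-- Base case `n = 1`. -/
lemma IH_base : IHdata 1 (26 / 9) (50 / 9) (-(20 / 9)) := by
  classical
  have hcoord_a : Fmap 1 (q 0) = ((1:ℝ)/4, Real.sqrt 3 / 4) := by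
    rw [Fmap_coord]; simp [q, Prod.ext_iff]; constructor <;> ring
  have hcoord_b : Fmap 2 (q 0) = ((3:ℝ)/4, Real.sqrt 3 / 4) := by
    rw [Fmap_coord]; simp [q, Prod.ext_iff]; constructor <;> ring
  have hx0 : xb 1 0 = ((0:ℝ), (0:ℝ)) := by rw [xb_coord]; norm_num
  have hx1 : xb 1 1 = ((1:ℝ)/2, (0:ℝ)) := by rw [xb_coord]; norm_num
  have hx2 : xb 1 2 = ((1:ℝ), (0:ℝ)) := by rw [xb_coord]; norm_num
  have hq0 : q 0 = ((1:ℝ)/2, Real.sqrt 3 / 2) := rfl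
  have hND : ∀ p r : ℝ × ℝ, p.1 ≠ r.1 → p ≠ r := fun p r h he => h (congrArg Prod.fst he)
  have d_x0q : xb 1 0 ≠ q 0 := (q0_ne_xb 1 0).symm
  have d_x1q : xb 1 1 ≠ q 0 := (q0_ne_xb 1 1).symm
  have d_x2q : xb 1 2 ≠ q 0 := (q0_ne_xb 1 2).symm
  have d_x10 : xb 1 1 ≠ xb 1 0 := fun h => absurd (xb_inj h) (by norm_num)
  have d_x20 : xb 1 2 ≠ xb 1 0 := fun h => absurd (xb_inj h) (by norm_num)
  have d_x21 : xb 1 2 ≠ xb 1 1 := fun h => absurd (xb_inj h) (by norm_num)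
  have d_x2a : xb 1 2 ≠ Fmap 1 (q 0) := by rw [hx2, hcoord_a]; exact hND _ _ (by norm_num)
  have d_x2b : xb 1 2 ≠ Fmap 2 (q 0) := by rw [hx2, hcoord_b]; exact hND _ _ (by norm_num)
  have d_aq : Fmap 1 (q 0) ≠ q 0 := by rw [hcoord_a, hq0]; exact hND _ _ (by norm_num)
  have d_ax0 : Fmap 1 (q 0) ≠ xb 1 0 := by rw [hcoord_a, hx0]; exact hND _ _ (by norm_num)
  have d_ax1 : Fmap 1 (q 0) ≠ xb 1 1 := by rw [hcoord_a, hx1]; exact hND _ _ (by norm_num)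
  have d_bq : Fmap 2 (q 0) ≠ q 0 := by rw [hcoord_b, hq0]; exact hND _ _ (by norm_num)
  have d_bx0 : Fmap 2 (q 0) ≠ xb 1 0 := by rw [hcoord_b, hx0]; exact hND _ _ (by norm_num)
  have d_bx1 : Fmap 2 (q 0) ≠ xb 1 1 := by rw [hcoord_b, hx1]; exact hND _ _ (by norm_num)
  have d_ba : Fmap 2 (q 0) ≠ Fmap 1 (q 0) := by
    rw [hcoord_b, hcoord_a]; exact hND _ _ (by norm_num)
  have energy1 : ∀ u : ℝ × ℝ → ℝ, Energy 1 u =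
      5/3 * (Tform (u (q 0)) (u (Fmap 1 (q 0))) (u (Fmap 2 (q 0)))
        + Tform (u (Fmap 1 (q 0))) (u (xb 1 0)) (u (xb 1 1))
        + Tform (u (Fmap 2 (q 0))) (u (xb 1 1)) (u (xb 1 2))) := by
    intro u
    have hF12 : Fmap 1 (q 2) = xb 1 1 := by rw [← xb_last 0, Fmap1_xb]; norm_num
    have hF21 : Fmap 2 (q 1) = xb 1 1 := by rw [← F1q2_eq_F2q1]; exact hF12
    have hF22 : Fmap 2 (q 2) = xb 1 2 := by rw [← xb_last 0, Fmap2_xb]; norm_num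
    have e := energy_succ 0 u
    norm_num at e
    rw [e, energy_zero, energy_zero, energy_zero]
    simp only [Function.comp_apply]
    rw [hF12, hF21, hF22, F0q1_eq_F1q0, F0q2_eq_F2q0, Fmap_fix 0, Fmap_fix 1,
      ← xb_zero 1]
    unfold Tform
    ring
  intro s0 s1 t
  set αs : ℝ := (5*t + 4*s0 + 5*s1)/15 with hαs
  set βs : ℝ := (5*t + s0 + 5*s1)/15 with hβs
  constructor
  · -- attainment
    refine ⟨fun y => if y = q 0 then t else if y = xb 1 0 then s0 else if y = xb 1 1 then s1
      else if y = Fmap 1 (q 0) then αs else if y = Fmap 2 (q 0) then βs else 0,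
      ⟨?_, ?_, ?_, ?_⟩, ?_⟩
    · beta_reduce
      rw [if_neg d_x0q, if_pos rfl]
    · beta_reduce
      rw [if_neg d_x1q, if_neg d_x10, if_pos rfl]
    · beta_reduce
      rw [if_pos rfl]
    · intro j h2 hle
      interval_cases j
      beta_reduce
      rw [if_neg d_x2q, if_neg d_x20, if_neg d_x21, if_neg d_x2a, if_neg d_x2b]
    · rw [energy1]
      beta_reduce
      rw [if_pos rfl]
      rw [if_neg d_aq, if_neg d_ax0, if_neg d_ax1, if_pos rfl]
      rw [if_neg d_bq, if_neg d_bx0, if_neg d_bx1, if_neg d_ba, if_pos rfl]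
      rw [if_neg d_x0q, if_pos rfl]
      rw [if_neg d_x1q, if_neg d_x10, if_pos rfl]
      rw [if_neg d_x2q, if_neg d_x20, if_neg d_x21, if_neg d_x2a, if_neg d_x2b]
      rw [hαs, hβs]
      unfold Tform qform Tn bb0 bb1 Dden
      norm_num
      ring
  · -- lower bound
    rintro u ⟨h0, h1, ht, hz⟩
    rw [energy1 u, h0, h1, ht, hz 2 (by norm_num) (by norm_num)]
    unfold Tform qform Tn bb0 bb1 Dden
    norm_num
    nlinarith [sq_nonneg (4 * u (Fmap 1 (q 0)) - u (Fmap 2 (q 0)) - t - s0 - s1),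
      sq_nonneg (15 * u (Fmap 2 (q 0)) - 5*t - s0 - 5*s1)]

/-! ### Section 7: the inductive step -/

lemma two_le_two_pow {n : ℕ} (hn : 1 ≤ n) : 2 ≤ 2 ^ n := by
  calc 2 = 2 ^ 1 := (pow_one 2).symm
  _ ≤ 2 ^ n := Nat.pow_le_pow_right (by norm_num) hn

lemma IH_step {n : ℕ} (hn : 1 ≤ n) {A0 A1 C : ℝ} (h : IHdata n A0 A1 C) :
    IHdata (n + 1) (stepA0 n A0) (stepA1 n A1) (stepC n C) := by
  intro s0 s1 t
  have h2n : 2 ≤ 2 ^ n := two_le_two_pow hn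
  constructor
  · -- attainment
    obtain ⟨u1, hu1bd, hu1E⟩ := (h s0 s1 (alphaS n s0 s1 t)).1
    obtain ⟨u2, hu2bd, hu2E⟩ := (h 0 0 (betaS n s0 s1 t)).1
    obtain ⟨u0, hu00, hu01, hu02, hu0E⟩ :=
      (RN_all n t (alphaS n s0 s1 t) (betaS n s0 s1 t)).1
    have h12' : u1 (q 2) = u2 (q 1) := by
      rw [← xb_last n, ← xb_zero n, hu1bd.2.2.2 (2 ^ n) h2n le_rfl, hu2bd.1]
    obtain ⟨u, hu⟩ := glue n u0 u1 u2 (by rw [hu01, hu1bd.2.2.1])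
      (by rw [hu02, hu2bd.2.2.1]) h12'
    refine ⟨u, ⟨?_, ?_, ?_, ?_⟩, ?_⟩
    · rw [← Fmap1_xb n 0, (hu _ (xb_mem_V (Nat.zero_le _))).2.1, hu1bd.1]
    · rw [← Fmap1_xb n 1, (hu _ (xb_mem_V Nat.one_le_two_pow)).2.1, hu1bd.2.1]
    · rw [← Fmap_fix 0, (hu _ (q_mem_V n 0)).1, hu00]
    · intro j hj2 hjle
      rcases le_or_gt j (2 ^ n) with hc | hc
      · rw [← Fmap1_xb n j, (hu _ (xb_mem_V hc)).2.1]
        exact hu1bd.2.2.2 j hj2 hc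
      · obtain ⟨k, rfl⟩ : ∃ k, j = 2 ^ n + k := ⟨j - 2 ^ n, by omega⟩
        have hk : k ≤ 2 ^ n := by rw [pow_succ] at hjle; omega
        rw [← Fmap2_xb n k, (hu _ (xb_mem_V hk)).2.2]
        rcases k with _ | _ | k
        · exact hu2bd.1
        · exact hu2bd.2.1
        · exact hu2bd.2.2.2 (k + 2) (by omega) hk
    · rw [energy_succ,
        show Energy n (u ∘ Fmap 0) = Energy n u0 from energy_congr (fun x hx => (hu x hx).1),
        show Energy n (u ∘ Fmap 1) = Energy n u1 from energy_congr (fun x hx => (hu x hx).2.1),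
        show Energy n (u ∘ Fmap 2) = Energy n u2 from energy_congr (fun x hx => (hu x hx).2.2),
        hu0E, hu1E, hu2E, qform_tbeta]
      have hm := master n A0 A1 C s0 s1 t (alphaS n s0 s1 t) (betaS n s0 s1 t)
      simp only [sub_self] at hm
      norm_num at hm
      linarith [hm]
  · -- lower bound
    rintro u ⟨h0, h1, ht, hz⟩
    rw [energy_succ]
    have c1 : BD n s0 s1 (u (Fmap 1 (q 0))) (u ∘ Fmap 1) := by
      refine ⟨?_, ?_, rfl, ?_⟩
      · show u (Fmap 1 (xb n 0)) = s0
        rw [Fmap1_xb]; exact h0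
      · show u (Fmap 1 (xb n 1)) = s1
        rw [Fmap1_xb]; exact h1
      · intro j hj2 hjle
        show u (Fmap 1 (xb n j)) = 0
        rw [Fmap1_xb]
        exact hz j hj2 (le_trans hjle (by rw [pow_succ]; omega))
    have c2 : BD n 0 0 (u (Fmap 2 (q 0))) (u ∘ Fmap 2) := by
      refine ⟨?_, ?_, rfl, ?_⟩
      · show u (Fmap 2 (xb n 0)) = 0
        rw [Fmap2_xb]
        exact hz (2 ^ n + 0) (by omega) (by rw [pow_succ]; omega)
      · show u (Fmap 2 (xb n 1)) = 0
        rw [Fmap2_xb]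
        exact hz (2 ^ n + 1) (by omega) (by rw [pow_succ]; omega)
      · intro j hj2 hjle
        show u (Fmap 2 (xb n j)) = 0
        rw [Fmap2_xb]
        exact hz (2 ^ n + j) (by omega) (by rw [pow_succ]; omega)
    have c0 : Tform t (u (Fmap 1 (q 0))) (u (Fmap 2 (q 0))) ≤ Energy n (u ∘ Fmap 0) :=
      (RN_all n t _ _).2 (u ∘ Fmap 0)
        (by show u (Fmap 0 (q 0)) = t; rw [Fmap_fix]; exact ht)
        (by show u (Fmap 0 (q 1)) = u (Fmap 1 (q 0)); rw [F0q1_eq_F1q0])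
        (by show u (Fmap 0 (q 2)) = u (Fmap 2 (q 0)); rw [F0q2_eq_F2q0])
    have e1 := (h s0 s1 (u (Fmap 1 (q 0)))).2 _ c1
    have e2 := (h 0 0 (u (Fmap 2 (q 0)))).2 _ c2
    rw [qform_tbeta] at e2
    have hm := master n A0 A1 C s0 s1 t (u (Fmap 1 (q 0))) (u (Fmap 2 (q 0)))
    have hrem : (0:ℝ) ≤ ((u (Fmap 1 (q 0)) - alphaS n s0 s1 t) -
        (u (Fmap 2 (q 0)) - betaS n s0 s1 t)) ^ 2 +
        (Tn n + 1) * ((u (Fmap 1 (q 0)) - alphaS n s0 s1 t) ^ 2 +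
          (u (Fmap 2 (q 0)) - betaS n s0 s1 t) ^ 2) := by
      nlinarith [Tn_pos n,
        sq_nonneg ((u (Fmap 1 (q 0)) - alphaS n s0 s1 t) -
          (u (Fmap 2 (q 0)) - betaS n s0 s1 t)),
        sq_nonneg (u (Fmap 1 (q 0)) - alphaS n s0 s1 t),
        sq_nonneg (u (Fmap 2 (q 0)) - betaS n s0 s1 t)]
    linarith [e1, e2, c0, hm, hrem]

/-! ### Section 8: conductances -/

lemma Q_eq {n : ℕ} {A0 A1 C : ℝ} (h : IHdata n A0 A1 C) (v : ℝ × ℝ → ℝ) (s0 s1 t : ℝ)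
    (h0 : v (xb n 0) = s0) (h1 : v (xb n 1) = s1) (ht : v (q 0) = t)
    (hz : ∀ j : ℕ, 2 ≤ j → j ≤ 2 ^ n → v (xb n j) = 0) :
    Q n (Eplus n) v = qform n A0 A1 C s0 s1 t := by
  obtain ⟨⟨u, ⟨hu0, hu1, hut, huz⟩, huE⟩, hlow⟩ := h s0 s1 t
  have hadm : ∀ x ∈ Eplus n, u x = v x := by
    intro x hx
    rcases Set.mem_insert_iff.mp hx with rfl | ⟨j, hj, rfl⟩
    · rw [hut, ht]
    · rcases j with _ | _ | j
      · rw [hu0, h0]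
      · rw [hu1, h1]
      · rw [huz _ (by omega) hj, hz _ (by omega) hj]
  unfold Q
  apply le_antisymm
  · exact csInf_le ⟨0, by rintro r ⟨w, -, rfl⟩; exact energy_nonneg n w⟩ ⟨u, hadm, huE.symm⟩
  · apply le_csInf
    · exact ⟨Energy n u, ⟨u, hadm, rfl⟩⟩
    rintro r ⟨w, hw, rfl⟩
    apply hlow
    refine ⟨?_, ?_, ?_, ?_⟩
    · rw [hw _ (Set.mem_insert_iff.mpr (Or.inr ⟨0, Nat.zero_le _, rfl⟩)), h0]
    · rw [hw _ (Set.mem_insert_iff.mpr (Or.inr ⟨1, Nat.one_le_two_pow, rfl⟩)), h1]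
    · rw [hw _ (Set.mem_insert_iff.mpr (Or.inl rfl)), ht]
    · intro j hj2 hjle
      rw [hw _ (Set.mem_insert_iff.mpr (Or.inr ⟨j, hjle, rfl⟩)), hz j hj2 hjle]

lemma cond_eq {n : ℕ} {A0 A1 C : ℝ} (h : IHdata n A0 A1 C) :
    cond n (Eplus n) (xb n 0) (xb n 1) = -C := by
  have hne10 : xb n 1 ≠ xb n 0 := fun hh => absurd (xb_inj hh) one_ne_zero
  have hne01 : xb n 0 ≠ xb n 1 := hne10.symm
  have Q1 : Q n (Eplus n) (ind (xb n 0)) = qform n A0 A1 C 1 0 0 := by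
    apply Q_eq h _ 1 0 0
    · unfold ind; rw [if_pos rfl]
    · unfold ind; rw [if_neg hne10]
    · unfold ind; rw [if_neg (q0_ne_xb n 0)]
    · intro j hj2 _
      unfold ind; rw [if_neg (fun hh => by have := xb_inj hh; omega)]
  have Q2 : Q n (Eplus n) (ind (xb n 1)) = qform n A0 A1 C 0 1 0 := by
    apply Q_eq h _ 0 1 0
    · unfold ind; rw [if_neg hne01]
    · unfold ind; rw [if_pos rfl]
    · unfold ind; rw [if_neg (q0_ne_xb n 1)]
    · intro j hj2 _
      unfold ind; rw [if_neg (fun hh => by have := xb_inj hh; omega)]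
  have Q3 : Q n (Eplus n) (ind (xb n 0) + ind (xb n 1)) = qform n A0 A1 C 1 1 0 := by
    apply Q_eq h _ 1 1 0
    · show ind (xb n 0) (xb n 0) + ind (xb n 1) (xb n 0) = 1
      unfold ind
      rw [if_pos rfl, if_neg hne01]; norm_num
    · show ind (xb n 0) (xb n 1) + ind (xb n 1) (xb n 1) = 1
      unfold ind
      rw [if_pos rfl, if_neg hne10]; norm_num
    · show ind (xb n 0) (q 0) + ind (xb n 1) (q 0) = 0
      unfold ind
      rw [if_neg (q0_ne_xb n 0), if_neg (q0_ne_xb n 1)]; norm_num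
    · intro j hj2 _
      show ind (xb n 0) (xb n j) + ind (xb n 1) (xb n j) = 0
      unfold ind
      rw [if_neg (fun hh => by have := xb_inj hh; omega),
        if_neg (fun hh => by have := xb_inj hh; omega)]
      norm_num
  unfold cond
  rw [Q1, Q2, Q3]
  unfold qform
  ring

lemma IH_exists : ∀ n : ℕ, 1 ≤ n → ∃ A0 A1 C : ℝ, IHdata n A0 A1 C := by
  intro n hn
  induction n, hn using Nat.le_induction with
  | base => exact ⟨_, _, _, IH_base⟩
  | succ n hn ih =>
    obtain ⟨A0, A1, C, h⟩ := ih
    exact ⟨_, _, _, IH_step hn h⟩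


/-- With `l_n = c^n_{x₀,x₁}` (conductances of `E_n⁺` at level `n`):
`l₁ = 20/9` and the stated recurrence for `l_{n+1}`. -/
theorem stmt12 :
    cond 1 (Eplus 1) (xb 1 0) (xb 1 1) = 20 / 9 ∧
    ∀ n : ℕ, 1 ≤ n →
      cond (n + 1) (Eplus (n + 1)) (xb (n + 1) 0) (xb (n + 1) 1) =
        5 / 3 * cond n (Eplus n) (xb n 0) (xb n 1) +
          98 * 25 ^ (n + 1) * (10 * 3 ^ (n + 1) + 39 * 10 ^ (n + 1)) /
            ((3 ^ (n + 1) + 6 * 10 ^ (n + 1)) * (5 * 3 ^ (n + 1) + 16 * 10 ^ (n + 1)) *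
              (5 * 3 ^ (n + 1) + 9 * 10 ^ (n + 1))) := by
  constructor
  · rw [cond_eq IH_base]
    norm_num
  · intro n hn
    obtain ⟨A0, A1, C, h⟩ := IH_exists n hn
    rw [cond_eq h, cond_eq (IH_step hn h)]
    have hN : (0:ℝ) < 3 ^ n := by positivity
    have hM : (0:ℝ) < 10 ^ n := by positivity
    have d1 : (3:ℝ) ^ n + 6 * 10 ^ n ≠ 0 := by positivity
    have d2 : (3:ℝ) ^ n + 20 * 10 ^ n ≠ 0 := by positivity
    have d3 : 3 * (3:ℝ) ^ n + 32 * 10 ^ n ≠ 0 := by positivity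
    have d4 : (3:ℝ) ^ n * 3 + 6 * (10 ^ n * 10) ≠ 0 := by positivity
    have d5 : 5 * ((3:ℝ) ^ n * 3) + 16 * (10 ^ n * 10) ≠ 0 := by positivity
    have d6 : 5 * ((3:ℝ) ^ n * 3) + 9 * (10 ^ n * 10) ≠ 0 := by positivity
    have hPq : Pq n = (2 * (3:ℝ) ^ n + 26 * 10 ^ n) / ((3:ℝ) ^ n + 6 * 10 ^ n) := by
      unfold Pq Tn Dden
      field_simp
      ring
    have hDl : Dl n = (((3:ℝ) ^ n + 20 * 10 ^ n) * (3 * (3:ℝ) ^ n + 32 * 10 ^ n)) /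
        ((3:ℝ) ^ n + 6 * 10 ^ n) ^ 2 := by
      unfold Dl
      rw [hPq]
      field_simp
      ring
    have h25n : (25:ℝ) ^ n = 5 ^ n * 5 ^ n := by
      rw [← mul_pow]; norm_num
    unfold stepC
    rw [hPq, hDl]
    unfold bb0 bb1 Dden
    simp only [pow_succ, h25n]
    field_simp
    ring

end SGPaper
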